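/- Let c ≥ 1, 0 < ε < 1, 0 < δ < 1, and σ ≥ sqrt(8 * log(1.25/δ)) / ε. Let u, v ∈ ℝ^c be two count vectors with Euclidean distance ‖u − v‖₂ ≤ sqrt(2). Then for every measurable function F : ℝ^c → Fin c (e.g., any measurable tie-breaking argmax) and every class j ∈ Fin c, the probability under Z ~ N(0, σ²I_c) that F(u + Z) = j is at most exp(ε) times the probability that F(v + Z) = j, plus δ. In particular the GNMax aggregator, which outputs argmax_j(n_j + Gaussian noise), satisfies (ε,δ)-differential privacy whenever σ ≥ sqrt(8 log(1.25/δ))/ε. -/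

import Mathlib

open MeasureTheory ProbabilityTheory

/-- The isotropic Gaussian measure `N(m, σ²·I_d)` on `ℝ^d` (Euclidean space), defined as the
product of one-dimensional real Gaussian measures `gaussianReal (m i) σ²`. -/
noncomputable def isoGaussian (d : ℕ) (m : EuclideanSpace ℝ (Fin d)) (σ : ℝ) :
    Measure (EuclideanSpace ℝ (Fin d)) :=
  (Measure.pi (fun i => gaussianReal (m i) ((σ ^ 2).toNNReal))).map
    (MeasurableEquiv.toLp 2 (Fin d → ℝ))

open Real
open scoped ENNReal NNReal

section Aux

/-- Tonelli for a product of single-coordinate `ℝ≥0∞`-valued functions over a finite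
product measure. -/
theorem GnmaxAux.lintegral_pi_prod : ∀ {n : ℕ} (μ : Fin n → Measure ℝ), (∀ i, SigmaFinite (μ i)) →
    ∀ (f : Fin n → ℝ → ℝ≥0∞), (∀ i, Measurable (f i)) →
    ∫⁻ x, ∏ i, f i (x i) ∂Measure.pi μ = ∏ i, ∫⁻ y, f i y ∂μ i := by
  intro n
  induction n with
  | zero =>
    intro μ _ f _
    simp [Measure.pi_of_empty]
  | succ n ih =>
    intro μ hμ f hf
    have hsf : ∀ i, SigmaFinite (μ i) := hμ
    have hmp := (measurePreserving_piFinSuccAbove μ 0).symm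
    have hmeas : Measurable fun (x : Fin (n+1) → ℝ) => ∏ i, f i (x i) :=
      Finset.measurable_prod _ fun i _ => (hf i).comp (measurable_pi_apply i)
    rw [← hmp.lintegral_comp hmeas]
    simp_rw [MeasurableEquiv.piFinSuccAbove_symm_apply, Fin.insertNthEquiv,
      Fin.prod_univ_succ, Fin.insertNth_zero, Equiv.coe_fn_mk, Fin.cons_zero, Fin.cons_succ,
      Fin.zero_succAbove, cast_eq]
    rw [lintegral_prod_mul ((hf 0).aemeasurable)
      (((Finset.measurable_prod Finset.univ (fun (i : Fin n) _ =>
        (hf i.succ).comp (measurable_pi_apply i))) :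
        Measurable fun (y : Fin n → ℝ) => ∏ i : Fin n, f i.succ (y i)).aemeasurable)]
    rw [ih _ (fun i => hμ _) _ (fun i => hf _)]

/-- A product of 1-dimensional Gaussians equals Lebesgue measure with the product density. -/
theorem GnmaxAux.pi_gaussian_eq_withDensity {n : ℕ} (m : Fin n → ℝ) {V : ℝ≥0} (hV : V ≠ 0) :
    Measure.pi (fun i => gaussianReal (m i) V)
      = (Measure.pi fun _ : Fin n => (volume : Measure ℝ)).withDensity
          (fun x => ∏ i, gaussianPDF (m i) V (x i)) := by
  refine (Measure.pi_eq (μ := fun i => gaussianReal (m i) V) fun s hs => ?_)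
  rw [withDensity_apply _ (MeasurableSet.univ_pi hs),
    ← lintegral_indicator (MeasurableSet.univ_pi hs) _]
  have : ∀ x : Fin n → ℝ, (Set.univ.pi s).indicator (fun x => ∏ i, gaussianPDF (m i) V (x i)) x
      = ∏ i, (s i).indicator (fun y => gaussianPDF (m i) V y) (x i) := by
    intro x
    by_cases hx : x ∈ Set.univ.pi s
    · rw [Set.indicator_of_mem hx]
      exact Finset.prod_congr rfl fun i _ =>
        (Set.indicator_of_mem (hx i (Set.mem_univ i)) _).symm
    · rw [Set.indicator_of_notMem hx]
      have hx' : ∃ i, x i ∉ s i := by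
        by_contra h
        push_neg at h
        exact hx fun i _ => h i
      obtain ⟨i, hi⟩ := hx'
      exact (Finset.prod_eq_zero (Finset.mem_univ i)
        (by rw [Set.indicator_of_notMem hi])).symm
  simp_rw [this]
  rw [GnmaxAux.lintegral_pi_prod _ (fun _ => inferInstance) _
    (fun i => (measurable_gaussianPDF (m i) V).indicator (hs i))]
  refine Finset.prod_congr rfl fun i _ => ?_
  rw [lintegral_indicator (hs i) _, gaussianReal_apply _ hV _]

lemma GnmaxAux.gaussian_exp_shift (a b m x : ℝ) {V : ℝ≥0} (hV : V ≠ 0) :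
    Real.exp (a * x + b) * gaussianPDFReal m V x
      = Real.exp (a * m + b + a ^ 2 * V / 2) * gaussianPDFReal (m + a * V) V x := by
  have hV0 : (0 : ℝ) < V := by positivity
  unfold gaussianPDFReal
  rw [mul_comm (Real.exp (a * x + b)), mul_assoc, ← Real.exp_add, mul_left_comm, ← Real.exp_add]
  congr 1
  field_simp
  ring

/-- The moment generating function of a 1-dimensional Gaussian. -/
lemma GnmaxAux.lintegral_exp_gaussian (a b m : ℝ) {V : ℝ≥0} (hV : V ≠ 0) :
    ∫⁻ x, ENNReal.ofReal (Real.exp (a * x + b)) ∂(gaussianReal m V)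
      = ENNReal.ofReal (Real.exp (a * m + b + a ^ 2 * V / 2)) := by
  have hmeas : Measurable fun x => ENNReal.ofReal (Real.exp (a * x + b)) := by fun_prop
  rw [gaussianReal_of_var_ne_zero m hV,
    lintegral_withDensity_eq_lintegral_mul _ (measurable_gaussianPDF m V) hmeas]
  have : ∀ x, (gaussianPDF m V * fun x => ENNReal.ofReal (Real.exp (a * x + b))) x
      = ENNReal.ofReal (Real.exp (a * m + b + a ^ 2 * V / 2)) * gaussianPDF (m + a * V) V x := by
    intro x
    simp only [Pi.mul_apply, gaussianPDF]
    rw [← ENNReal.ofReal_mul (gaussianPDFReal_nonneg m V x), ← ENNReal.ofReal_mul (by positivity)]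
    congr 1
    rw [mul_comm (gaussianPDFReal m V x)]
    exact GnmaxAux.gaussian_exp_shift a b m x hV
  simp_rw [this]
  rw [lintegral_const_mul _ (measurable_gaussianPDF _ V), lintegral_gaussianPDF_eq_one _ hV,
    mul_one]

lemma GnmaxAux.gaussian_pdf_translate (x t : ℝ) {V : ℝ≥0} (hV : V ≠ 0) :
    gaussianPDFReal 0 V x
      = Real.exp ((2 * t * x + t ^ 2) / (2 * (V : ℝ))) * gaussianPDFReal 0 V (x + t) := by
  have hV0 : (0 : ℝ) < V := by positivity
  unfold gaussianPDFReal
  rw [mul_left_comm, ← Real.exp_add]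
  congr 1
  field_simp
  ring

/-- Translation invariance of the product Lebesgue measure, for lower integrals. -/
lemma GnmaxAux.lintegral_translate (c : ℕ) (g : (Fin c → ℝ) → ℝ≥0∞)
    (w : Fin c → ℝ) :
    ∫⁻ y, g (y + w) ∂(Measure.pi fun _ : Fin c => (volume : Measure ℝ))
      = ∫⁻ y, g y ∂(Measure.pi fun _ : Fin c => (volume : Measure ℝ)) := by
  rw [← MeasureTheory.volume_pi]
  exact lintegral_add_right_eq_self _ w

/-- Standalone algebraic identity for the optimal Chernoff exponent. -/
lemma GnmaxAux.exponent_eq (ε σ W : ℝ) (hW : W ≠ 0) (hσ : σ ≠ 0) :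
    -((σ ^ 2 * ε - W / 2) / W * ε)
        + W * (((σ ^ 2 * ε - W / 2) / W + ((σ ^ 2 * ε - W / 2) / W) ^ 2) / (2 * σ ^ 2))
      = -((σ ^ 2 * ε - W / 2) ^ 2 / (2 * W * σ ^ 2)) := by
  field_simp
  ring

/-- The key numerical estimate behind the Gaussian mechanism. -/
lemma GnmaxAux.numeric (ε δ σ W : ℝ) (hε : 0 < ε) (hε1 : ε < 1) (hδ : 0 < δ) (hδ1 : δ < 1)
    (hW0 : 0 < W) (hW : W ≤ 2) (hσ0 : 0 < σ)
    (hσ2 : 8 * Real.log (1.25 / δ) ≤ σ ^ 2 * ε ^ 2) :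
    0 < σ ^ 2 * ε - W / 2 ∧ 2 * W * σ ^ 2 * (-Real.log δ) ≤ (σ ^ 2 * ε - W / 2) ^ 2 := by
  have hlog : Real.log (1.25 / δ) = Real.log 1.25 - Real.log δ :=
    Real.log_div (by norm_num) hδ.ne'
  have hc0 : (1 / 5 : ℝ) ≤ Real.log 1.25 := by
    have h45 : Real.log (4 / 5 : ℝ) ≤ 4 / 5 - 1 := Real.log_le_sub_one_of_pos (by norm_num)
    have : Real.log (1.25 : ℝ) = -Real.log (4 / 5 : ℝ) := by
      rw [← Real.log_inv]; norm_num
    linarith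
  have hL : 0 < -Real.log δ := by
    have := Real.log_neg hδ hδ1; linarith
  set L : ℝ := -Real.log δ with hLdef
  have hB0 : (0 : ℝ) < σ ^ 2 := by positivity
  have h8 : 8 / 5 + 8 * L ≤ σ ^ 2 * ε ^ 2 := by
    rw [hlog] at hσ2; linarith
  have hA : σ ^ 2 * ε ^ 2 ≤ σ ^ 2 * ε := by nlinarith
  have ht : 3 / 5 + 8 * L ≤ σ ^ 2 * ε - 1 := by nlinarith
  have ht0 : 0 < σ ^ 2 * ε - W / 2 := by nlinarith
  refine ⟨ht0, ?_⟩
  have h2 : (σ ^ 2 * ε - 1) ^ 2 ≤ (σ ^ 2 * ε - W / 2) ^ 2 := by nlinarith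
  have h3 : 2 * W * σ ^ 2 * L ≤ 4 * σ ^ 2 * L := by
    nlinarith [mul_nonneg (mul_nonneg (by linarith : (0:ℝ) ≤ 2 - W) hB0.le) hL.le]
  have h4 : 4 * σ ^ 2 * L ≤ (σ ^ 2 * ε - 1) ^ 2 := by
    nlinarith [sq_nonneg (σ ^ 2 * ε - 6 / 5), mul_le_mul_of_nonneg_left hε1.le hB0.le,
      mul_nonneg hB0.le hε.le, mul_nonneg (mul_nonneg hB0.le hB0.le) hε.le]
  calc 2 * W * σ ^ 2 * L ≤ 4 * σ ^ 2 * L := h3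
    _ ≤ (σ ^ 2 * ε - 1) ^ 2 := h4
    _ ≤ (σ ^ 2 * ε - W / 2) ^ 2 := h2

end Aux

set_option maxHeartbeats 1000000 in
/-- **DP of the GNMax aggregator.** Let `σ ≥ √(8 log(1.25/δ))/ε` and let `u, v` be two count
vectors with `‖u − v‖₂ ≤ √2`. Then for every measurable post-processing `F : ℝ^c → Fin c`
(e.g., a measurable argmax with tie-breaking) and every class `j`, the probability under
`Z ~ N(0, σ²I_c)` that `F(u + Z) = j` is at most `e^ε` times that for `v`, plus `δ`. -/
theorem gnmax_dp (c : ℕ) (hc : 1 ≤ c) (ε δ σ : ℝ)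
    (hε : 0 < ε) (hε1 : ε < 1) (hδ : 0 < δ) (hδ1 : δ < 1)
    (hσ : Real.sqrt (8 * Real.log (1.25 / δ)) / ε ≤ σ)
    (u v : EuclideanSpace ℝ (Fin c)) (huv : ‖u - v‖ ≤ Real.sqrt 2)
    (F : EuclideanSpace ℝ (Fin c) → Fin c) (hF : Measurable F) (j : Fin c) :
    isoGaussian c 0 σ {z | F (u + z) = j}
      ≤ ENNReal.ofReal (Real.exp ε) * isoGaussian c 0 σ {z | F (v + z) = j}
        + ENNReal.ofReal δ := by
  classical
  have hl : 0 < Real.log (1.25 / δ) := Real.log_pos (by rw [lt_div_iff₀ hδ]; linarith)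
  have hsq : 0 < Real.sqrt (8 * Real.log (1.25 / δ)) := Real.sqrt_pos.2 (by positivity)
  have hσ0 : 0 < σ := lt_of_lt_of_le (div_pos hsq hε) hσ
  have hσ2 : 8 * Real.log (1.25 / δ) ≤ σ ^ 2 * ε ^ 2 := by
    rw [div_le_iff₀ hε] at hσ
    have h2 := mul_self_le_mul_self (Real.sqrt_nonneg _) hσ
    rw [Real.mul_self_sqrt (by positivity)] at h2
    nlinarith
  set V : ℝ≥0 := (σ ^ 2).toNNReal with hVdef
  have hV : V ≠ 0 := by
    rw [hVdef, ← NNReal.coe_ne_zero, Real.coe_toNNReal _ (sq_nonneg σ)]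
    positivity
  have hVr : (V : ℝ) = σ ^ 2 := Real.coe_toNNReal _ (sq_nonneg σ)
  set w : EuclideanSpace ℝ (Fin c) := u - v with hwdef
  set W : ℝ := ∑ i, (w i) ^ 2 with hWdef
  have hWnn : 0 ≤ W := Finset.sum_nonneg fun i _ => sq_nonneg _
  have hW2 : W ≤ 2 := by
    have h1 : ‖u - v‖ ^ 2 ≤ Real.sqrt 2 ^ 2 := pow_le_pow_left₀ (norm_nonneg _) huv 2
    rw [Real.sq_sqrt (by norm_num : (0:ℝ) ≤ 2)] at h1
    have h2 : ‖u - v‖ ^ 2 = W := by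
      rw [EuclideanSpace.norm_eq,
        Real.sq_sqrt (Finset.sum_nonneg fun i _ => sq_nonneg _)]
      exact Finset.sum_congr rfl fun i _ => by rw [Real.norm_eq_abs, sq_abs]
    linarith
  rcases eq_or_lt_of_le hWnn with hW0 | hW0
  · -- `u = v`: trivial case
    have huv0 : u = v := by
      ext i
      have h := (Finset.sum_eq_zero_iff_of_nonneg (fun i _ => sq_nonneg (w i))).1 hW0.symm
        i (Finset.mem_univ i)
      have : w i = 0 := by nlinarith [h]
      have : u i - v i = 0 := this
      linarith
    rw [huv0]
    refine le_trans ?_ le_self_add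
    conv_lhs => rw [← one_mul (isoGaussian c 0 σ {z | F (v + z) = j})]
    refine mul_le_mul_left ?_ _
    rw [← ENNReal.ofReal_one]
    exact ENNReal.ofReal_le_ofReal (Real.one_le_exp hε.le)
  · -- main case
    set lam : Measure (EuclideanSpace ℝ (Fin c)) :=
      (Measure.pi fun _ : Fin c => (volume : Measure ℝ)).map
        (MeasurableEquiv.toLp 2 (Fin c → ℝ)) with hlam
    set D : EuclideanSpace ℝ (Fin c) → ℝ≥0∞ := fun z => ∏ i, gaussianPDF 0 V (z i) with hD
    set P : EuclideanSpace ℝ (Fin c) → ℝ := fun z => ∏ i, gaussianPDFReal 0 V (z i) with hP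
    have hPpos : ∀ z, 0 < P z := fun z =>
      Finset.prod_pos fun i _ => gaussianPDFReal_pos _ _ _ hV
    have hDP : ∀ z, D z = ENNReal.ofReal (P z) := fun z => by
      rw [hP, hD, ENNReal.ofReal_prod_of_nonneg fun i _ => gaussianPDFReal_nonneg _ _ _]
      rfl
    have hPmeas : Measurable P :=
      Finset.measurable_prod _ fun i _ =>
        (measurable_gaussianPDFReal 0 V).comp
            ((measurable_pi_apply i).comp (WithLp.measurable_ofLp 2 _))
    have hDmeas : Measurable D :=
      Finset.measurable_prod _ fun i _ =>
        (measurable_gaussianPDF 0 V).comp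
            ((measurable_pi_apply i).comp (WithLp.measurable_ofLp 2 _))
    have haddw : Measurable fun y : EuclideanSpace ℝ (Fin c) => y + w :=
      measurable_add_const w
    have haddu : Measurable fun z : EuclideanSpace ℝ (Fin c) => u + z :=
      measurable_const_add u
    have haddv : Measurable fun z : EuclideanSpace ℝ (Fin c) => v + z :=
      measurable_const_add v
    have hSu : MeasurableSet {z | F (u + z) = j} :=
      (hF.comp haddu) (measurableSet_singleton j)
    have hSv : MeasurableSet {z | F (v + z) = j} :=
      (hF.comp haddv) (measurableSet_singleton j)
    have hrepr : isoGaussian c 0 σ = lam.withDensity D := by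
      unfold isoGaussian
      show Measure.map _ (Measure.pi fun _ : Fin c => gaussianReal 0 V) = _
      rw [GnmaxAux.pi_gaussian_eq_withDensity (fun _ => 0) hV]
      ext s hs
      rw [Measure.map_apply (MeasurableEquiv.measurable _) hs, withDensity_apply _ hs, hlam,
        setLIntegral_map hs hDmeas (MeasurableEquiv.measurable _),
        withDensity_apply _ (MeasurableEquiv.measurable _ hs)]
      rfl
    have hwv : ∀ y : EuclideanSpace ℝ (Fin c), v + (y + w) = u + y := by
      intro y
      rw [hwdef]
      abel
    set G : Set (EuclideanSpace ℝ (Fin c)) := {y | P y ≤ Real.exp ε * P (y + w)} with hG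
    have hGm : MeasurableSet G :=
      measurableSet_le hPmeas (measurable_const.mul (hPmeas.comp haddw))
    set Q : EuclideanSpace ℝ (Fin c) → ℝ :=
      fun y => ∑ i, (2 * w i * y i + (w i) ^ 2) / (2 * σ ^ 2) with hQ
    have hratio : ∀ y, P y = Real.exp (Q y) * P (y + w) := by
      intro y
      rw [hQ, hP]
      simp only
      rw [Real.exp_sum, ← Finset.prod_mul_distrib]
      refine Finset.prod_congr rfl fun i _ => ?_
      have := GnmaxAux.gaussian_pdf_translate (y i) (w i) hV
      rw [hVr] at this
      rw [show (y + w) i = y i + w i from rfl]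
      rw [this]
    have hGc : ∀ y, y ∉ G → ε < Q y := by
      intro y hy
      rw [hG, Set.mem_setOf_eq, not_le] at hy
      rw [hratio y] at hy
      have := (mul_lt_mul_iff_left₀ (hPpos (y + w))).1 hy
      exact Real.exp_lt_exp.1 this
    obtain ⟨ht0, hkey⟩ := GnmaxAux.numeric ε δ σ W hε hε1 hδ hδ1 hW0 hW2 hσ0 hσ2
    set s : ℝ := (σ ^ 2 * ε - W / 2) / W with hs
    have hs0 : 0 ≤ s := div_nonneg ht0.le hW0.le
    have hterm1 : isoGaussian c 0 σ ({z | F (u + z) = j} ∩ G)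
        ≤ ENNReal.ofReal (Real.exp ε) * isoGaussian c 0 σ {z | F (v + z) = j} := by
      rw [hrepr, withDensity_apply _ (hSu.inter hGm), withDensity_apply _ hSv]
      have hpt : ∀ y, Set.indicator {z | F (u + z) = j} (fun y => D (y + w)) y
          = Set.indicator {z | F (v + z) = j} D (y + w) := by
        intro y
        by_cases hy : y ∈ {z | F (u + z) = j}
        · have hy' : y + w ∈ {z | F (v + z) = j} := by
            show F (v + (y + w)) = j
            rw [hwv y]; exact hy
          rw [Set.indicator_of_mem hy, Set.indicator_of_mem hy']
        · have hy' : y + w ∉ {z | F (v + z) = j} := by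
            intro h
            exact hy (show F (u + y) = j by rw [← hwv y]; exact h)
          rw [Set.indicator_of_notMem hy, Set.indicator_of_notMem hy']
      have htrans : ∫⁻ y in {z | F (u + z) = j}, D (y + w) ∂lam
          = ∫⁻ y in {z | F (v + z) = j}, D y ∂lam := by
        rw [← lintegral_indicator hSu _, ← lintegral_indicator hSv _]
        calc ∫⁻ y, Set.indicator {z | F (u + z) = j} (fun y => D (y + w)) y ∂lam
            = ∫⁻ y, Set.indicator {z | F (v + z) = j} D (y + w) ∂lam := lintegral_congr hpt
          _ = ∫⁻ y, Set.indicator {z | F (v + z) = j} D y ∂lam := by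
              rw [hlam, MeasurableEquiv.coe_toLp, ← MeasureTheory.volume_pi, (PiLp.volume_preserving_toLp (Fin c)).map_eq]
              exact lintegral_add_right_eq_self _ w
      calc ∫⁻ y in {z | F (u + z) = j} ∩ G, D y ∂lam
          ≤ ∫⁻ y in {z | F (u + z) = j} ∩ G, ENNReal.ofReal (Real.exp ε) * D (y + w) ∂lam := by
            refine setLIntegral_mono (measurable_const.mul (hDmeas.comp haddw)) fun y hy => ?_
            rw [hDP, hDP, ← ENNReal.ofReal_mul (Real.exp_nonneg ε)]
            exact ENNReal.ofReal_le_ofReal hy.2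
        _ = ENNReal.ofReal (Real.exp ε) * ∫⁻ y in {z | F (u + z) = j} ∩ G, D (y + w) ∂lam :=
            lintegral_const_mul _ (hDmeas.comp haddw)
        _ ≤ ENNReal.ofReal (Real.exp ε) * ∫⁻ y in {z | F (u + z) = j}, D (y + w) ∂lam :=
            mul_le_mul_right (lintegral_mono_set Set.inter_subset_left) _
        _ = ENNReal.ofReal (Real.exp ε) * ∫⁻ y in {z | F (v + z) = j}, D y ∂lam := by
            rw [htrans]
    have hterm2 : isoGaussian c 0 σ Gᶜ ≤ ENNReal.ofReal δ := by
      have hμpi : isoGaussian c 0 σ = (Measure.pi (fun _ : Fin c => gaussianReal 0 V)).map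
          (MeasurableEquiv.toLp 2 (Fin c → ℝ)) := rfl
      have hfmeas : ∀ i : Fin c, Measurable fun x : ℝ =>
          ENNReal.ofReal (Real.exp (s * w i / σ ^ 2 * x + s * (w i) ^ 2 / (2 * σ ^ 2))) := by
        intro i; fun_prop
      have hσne : σ ≠ 0 := hσ0.ne'
      have hQs : ∀ y : EuclideanSpace ℝ (Fin c),
          s * (Q y - ε) = -(s * ε) + ∑ i, (s * w i / σ ^ 2 * y i + s * (w i) ^ 2 / (2 * σ ^ 2)) := by
        intro y
        have h1 : ∑ i, (s * w i / σ ^ 2 * y i + s * (w i) ^ 2 / (2 * σ ^ 2)) = s * Q y := by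
          rw [hQ]
          simp only
          rw [Finset.mul_sum]
          refine Finset.sum_congr rfl fun i _ => ?_
          field_simp
        rw [h1]
        ring
      calc isoGaussian c 0 σ Gᶜ
          = ∫⁻ y, Gᶜ.indicator 1 y ∂isoGaussian c 0 σ := (lintegral_indicator_one hGm.compl).symm
        _ ≤ ∫⁻ y, ENNReal.ofReal (Real.exp (s * (Q y - ε))) ∂isoGaussian c 0 σ := by
            refine lintegral_mono fun y => ?_
            by_cases hy : y ∈ Gᶜ
            · rw [Set.indicator_of_mem hy]
              have hQy := hGc y hy
              have h0 : 0 ≤ s * (Q y - ε) := mul_nonneg hs0 (by linarith)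
              calc (1 : ℝ≥0∞) = ENNReal.ofReal (Real.exp 0) := by simp
                _ ≤ _ := ENNReal.ofReal_le_ofReal (Real.exp_le_exp.2 h0)
            · rw [Set.indicator_of_notMem hy]
              exact bot_le
        _ = ∫⁻ y, ENNReal.ofReal (Real.exp (-(s * ε)))
              * ∏ i, ENNReal.ofReal
                (Real.exp (s * w i / σ ^ 2 * y i + s * (w i) ^ 2 / (2 * σ ^ 2)))
              ∂isoGaussian c 0 σ := by
            refine lintegral_congr fun y => ?_
            rw [← ENNReal.ofReal_prod_of_nonneg (fun i _ => (Real.exp_pos _).le),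
              ← Real.exp_sum, ← ENNReal.ofReal_mul (Real.exp_nonneg _), ← Real.exp_add, hQs y]
        _ = ENNReal.ofReal (Real.exp (-(s * ε)))
              * ∫⁻ y, ∏ i, ENNReal.ofReal
                (Real.exp (s * w i / σ ^ 2 * y i + s * (w i) ^ 2 / (2 * σ ^ 2)))
              ∂isoGaussian c 0 σ :=
            lintegral_const_mul _ (Finset.measurable_prod _ fun i _ =>
              (hfmeas i).comp ((measurable_pi_apply i).comp (WithLp.measurable_ofLp 2 _)))
        _ = ENNReal.ofReal (Real.exp (-(s * ε)))
              * ∏ i, ENNReal.ofReal (Real.exp (s * w i / σ ^ 2 * 0 + s * (w i) ^ 2 / (2 * σ ^ 2)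
                  + (s * w i / σ ^ 2) ^ 2 * V / 2)) := by
            congr 1
            have hpp := GnmaxAux.lintegral_pi_prod (fun _ : Fin c => gaussianReal 0 V)
              (fun _ => inferInstance)
              (fun i x => ENNReal.ofReal
                (Real.exp (s * w i / σ ^ 2 * x + s * (w i) ^ 2 / (2 * σ ^ 2)))) hfmeas
            rw [hμpi, lintegral_map_equiv]
            exact hpp.trans (Finset.prod_congr rfl fun i _ =>
              GnmaxAux.lintegral_exp_gaussian (s * w i / σ ^ 2) (s * (w i) ^ 2 / (2 * σ ^ 2)) 0 hV)
        _ = ENNReal.ofReal (Real.exp (-(s * ε)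
              + ∑ i, (s * (w i) ^ 2 / (2 * σ ^ 2) + s ^ 2 * (w i) ^ 2 / (2 * σ ^ 2)))) := by
            rw [← ENNReal.ofReal_prod_of_nonneg (fun i _ => (Real.exp_pos _).le),
              ← Real.exp_sum, ← ENNReal.ofReal_mul (Real.exp_nonneg _), ← Real.exp_add]
            congr 2
            · congr 1
              refine Finset.sum_congr rfl fun i _ => ?_
              rw [hVr]
              field_simp
              ring
        _ = ENNReal.ofReal (Real.exp (-((σ ^ 2 * ε - W / 2) ^ 2 / (2 * W * σ ^ 2)))) := by
            congr 1
            have hsum : ∑ i, (s * (w i) ^ 2 / (2 * σ ^ 2) + s ^ 2 * (w i) ^ 2 / (2 * σ ^ 2))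
                = W * ((s + s ^ 2) / (2 * σ ^ 2)) := by
              rw [hWdef, Finset.sum_mul]
              refine Finset.sum_congr rfl fun i _ => ?_
              field_simp
            rw [hsum]
            have heq := GnmaxAux.exponent_eq ε σ W hW0.ne' hσne
            rw [hs]
            exact congrArg Real.exp heq
        _ ≤ ENNReal.ofReal δ := by
            refine ENNReal.ofReal_le_ofReal ?_
            rw [← Real.exp_log hδ]
            refine Real.exp_le_exp.2 ?_
            have h2W : (0:ℝ) < 2 * W * σ ^ 2 := by positivity
            have hdiv : -Real.log δ ≤ (σ ^ 2 * ε - W / 2) ^ 2 / (2 * W * σ ^ 2) :=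
              (le_div_iff₀ h2W).2 (by nlinarith [hkey])
            have := neg_le_neg hdiv
            rw [neg_neg] at this
            linarith [this]
    calc isoGaussian c 0 σ {z | F (u + z) = j}
        ≤ isoGaussian c 0 σ ({z | F (u + z) = j} ∩ G) + isoGaussian c 0 σ Gᶜ := by
          refine le_trans (measure_mono fun z hz => ?_) (measure_union_le _ _)
          by_cases hzG : z ∈ G
          · exact Or.inl ⟨hz, hzG⟩
          · exact Or.inr hzG
      _ ≤ ENNReal.ofReal (Real.exp ε) * isoGaussian c 0 σ {z | F (v + z) = j}
            + ENNReal.ofReal δ := add_le_add hterm1 hterm2
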